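/- Let A and C be prevarieties such that the variety V(A) generated by A is C-based. Then the following are equivalent: (1) U_{A,C} satisfies (S); (2) U_{B,C} satisfies (S) for each prevariety B with ISP(Free_A(ℵ_0)) ⊆ B ⊆ V(A). -/

import Mathlib

open FirstOrder FirstOrder.Language FirstOrder.Language.Structure

namespace CoproductsPaper

/-- Pointwise structure on a product of `L`-structures. -/
instance piStructure {L : FirstOrder.Language.{0,0}} {ι : Type} (M : ι → Type)
    [∀ i, L.Structure (M i)] : L.Structure (∀ i, M i) where
  funMap f x i := funMap f fun j => x j i
  RelMap r x := ∀ i, RelMap r fun j => x j i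

/-- A class of `L`-structures. -/
abbrev ClassOf (L : FirstOrder.Language.{0,0}) : Type 1 :=
  (X : Type) → L.Structure X → Prop

variable {L L' : FirstOrder.Language.{0,0}}

/-- A homomorphism of algebras (structures for an algebraic language), with the
structures given explicitly. -/
def IsAlgHomOn {X Y : Type} (iX : L.Structure X) (iY : L.Structure Y)
    (f : X → Y) : Prop :=
  ∀ {n : ℕ} (g : L.Functions n) (v : Fin n → X),
    f (@funMap L X iX n g v) = @funMap L Y iY n g (f ∘ v)

/-- An interpretation of the language `L'` (thought of as a set `T` of `L`-terms,
regarded as a language) inside the language `L`: each `n`-ary function symbol of `L'`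
is interpreted by an `L`-term in `n` variables. -/
structure TermTranslation (L L' : FirstOrder.Language.{0,0}) : Type where
  onFun : ∀ {n : ℕ}, L'.Functions n → L.Term (Fin n)

/-- The `T`-term-reduct of an `L`-structure `X`, an `L'`-structure on `X`. -/
def reduct [L'.IsAlgebraic] (T : TermTranslation L L') (X : Type)
    (iX : L.Structure X) : L'.Structure X where
  funMap {n} f v := @FirstOrder.Language.Term.realize L X iX (Fin n) v (T.onFun f)
  RelMap {n} r _ := isEmptyElim r

/-- `Acl` is `C`-based via the term translation `T`: the `T`-reduct of every member of
`Acl` belongs to `Ccl`. -/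
def CBased [L'.IsAlgebraic] (T : TermTranslation L L') (Acl : ClassOf L)
    (Ccl : ClassOf L') : Prop :=
  ∀ (X : Type) (iX : L.Structure X), Acl X iX → Ccl X (reduct T X iX)

/-- `(C, ε)` is a coproduct co-cone for the family `K` within the class `Acl`
(unbundled form). -/
def IsCoprodB (Acl : ClassOf L) {κ : Type} (K : κ → Type) (iK : ∀ k, L.Structure (K k))
    (C : Type) (iC : L.Structure C) (ε : ∀ k, K k → C) : Prop :=
  Acl C iC ∧ (∀ k, IsAlgHomOn (iK k) iC (ε k)) ∧
  ∀ (B : Type) (iB : L.Structure B), Acl B iB → ∀ f : ∀ k, K k → B,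
    (∀ k, IsAlgHomOn (iK k) iB (f k)) →
      ∃! h : C → B, IsAlgHomOn iC iB h ∧ ∀ k, h ∘ ε k = f k

/-- `F` is free over the class `Acl` on the generators `gen : G → F`. -/
def IsFreeOverB (Acl : ClassOf L) (G : Type) (F : Type) (iF : L.Structure F)
    (gen : G → F) : Prop :=
  Acl F iF ∧ ∀ (B : Type) (iB : L.Structure B), Acl B iB → ∀ v : G → B,
    ∃! h : F → B, IsAlgHomOn iF iB h ∧ ∀ x : G, h (gen x) = v x

/-- The class `Acl` is closed under isomorphic copies. -/
def ClosedUnderI (Acl : ClassOf L) : Prop :=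
  ∀ (X : Type) (iX : L.Structure X) (Y : Type) (iY : L.Structure Y), Acl X iX →
    ∀ e : X → Y, IsAlgHomOn iX iY e → Function.Bijective e → Acl Y iY

/-- The class `Acl` is closed under subalgebras (realised as injective
homomorphisms). -/
def ClosedUnderS (Acl : ClassOf L) : Prop :=
  ∀ (X : Type) (iX : L.Structure X), Acl X iX →
    ∀ (Y : Type) (iY : L.Structure Y) (e : Y → X),
      IsAlgHomOn iY iX e → Function.Injective e → Acl Y iY

/-- The class `Acl` is closed under (arbitrary) products. -/
def ClosedUnderP (Acl : ClassOf L) : Prop :=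
  ∀ (κ : Type) (Mfam : κ → Type) (iM : ∀ k, L.Structure (Mfam k)),
    (∀ k, Acl (Mfam k) (iM k)) →
      Acl (∀ k, Mfam k) (@piStructure L κ Mfam iM)

/-- `Acl` is a prevariety: a class of algebras closed under `I`, `S` and `P`. -/
def IsPrevariety (Acl : ClassOf L) : Prop :=
  ClosedUnderI Acl ∧ ClosedUnderS Acl ∧ ClosedUnderP Acl

/-- The functor `U_{A,C}` satisfies (S): for every set `K` of algebras in `Acl`, the
canonical comparison `C`-homomorphism `χ_K : ∐_C U(K) → U(∐_A K)` (characterised by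
commuting with the coproduct injections) is surjective. -/
def SatisfiesSB [L'.IsAlgebraic] (T : TermTranslation L L') (Acl : ClassOf L)
    (Ccl : ClassOf L') : Prop :=
  ∀ (κ : Type) (K : κ → Type) (iK : ∀ k, L.Structure (K k)),
    (∀ k, Acl (K k) (iK k)) →
    ∀ (C : Type) (iC : L.Structure C) (ε : ∀ k, K k → C),
      IsCoprodB Acl K iK C iC ε →
    ∀ (P : Type) (iP : L'.Structure P) (η : ∀ k, K k → P),
      IsCoprodB Ccl K (fun k => reduct T (K k) (iK k)) P iP η →
    ∀ χ : P → C, IsAlgHomOn iP (reduct T C iC) χ → (∀ k, χ ∘ η k = ε k) →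
      Function.Surjective χ

/-- The functor `U_{A,C}` satisfies (E): every canonical comparison homomorphism
`χ_K` is injective. -/
def SatisfiesEB [L'.IsAlgebraic] (T : TermTranslation L L') (Acl : ClassOf L)
    (Ccl : ClassOf L') : Prop :=
  ∀ (κ : Type) (K : κ → Type) (iK : ∀ k, L.Structure (K k)),
    (∀ k, Acl (K k) (iK k)) →
    ∀ (C : Type) (iC : L.Structure C) (ε : ∀ k, K k → C),
      IsCoprodB Acl K iK C iC ε →
    ∀ (P : Type) (iP : L'.Structure P) (η : ∀ k, K k → P),
      IsCoprodB Ccl K (fun k => reduct T (K k) (iK k)) P iP η →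
    ∀ χ : P → C, IsAlgHomOn iP (reduct T C iC) χ → (∀ k, χ ∘ η k = ε k) →
      Function.Injective χ

/-- Membership in the variety `V(Acl) = HSP(Acl)` generated by `Acl`:  homomorphic
images of subalgebras of products of members of `Acl`. -/
def InHSP (Acl : ClassOf L) : ClassOf L :=
  fun X iX =>
    ∃ (κ : Type) (Mfam : κ → Type) (iM : ∀ k, L.Structure (Mfam k)),
      (∀ k, Acl (Mfam k) (iM k)) ∧
      ∃ (D : Type) (iD : L.Structure D) (e : D → ∀ k, Mfam k) (f : D → X),
        IsAlgHomOn iD (@piStructure L κ Mfam iM) e ∧ Function.Injective e ∧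
        IsAlgHomOn iD iX f ∧ Function.Surjective f

/-- Membership in `ISP(M)` for a single algebra `M`: structures embeddable in a power
of `M`. -/
def ISPb1 (M : Type) (iM : L.Structure M) : ClassOf L :=
  fun X iX =>
    ∃ (κ : Type) (e : X → (κ → M)),
      IsAlgHomOn iX (@piStructure L κ (fun _ => M) (fun _ => iM)) e ∧
        Function.Injective e

-- ============== auxiliary lemmas ==============

variable {L L' : FirstOrder.Language.{0,0}}

lemma hom_realize {X Y : Type} {iX : L.Structure X} {iY : L.Structure Y} {f : X → Y}
    (hf : IsAlgHomOn iX iY f) {α : Type} (v : α → X) (t : L.Term α) :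
    f (@Term.realize L X iX α v t) = @Term.realize L Y iY α (fun a => f (v a)) t := by
  induction t with
  | var a => rfl
  | func g ts ih =>
      show f (@funMap L X iX _ g fun i => Term.realize v (ts i)) = _
      rw [hf g]
      show (@funMap L Y iY _ g fun i => f (Term.realize v (ts i))) = _
      congr 1
      funext i
      exact ih i

lemma IsAlgHomOn.comp' {X Y Z : Type} {iX : L.Structure X} {iY : L.Structure Y}
    {iZ : L.Structure Z} {f : X → Y} {g : Y → Z}
    (hf : IsAlgHomOn iX iY f) (hg : IsAlgHomOn iY iZ g) :
    IsAlgHomOn iX iZ (fun x => g (f x)) := by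
  intro n u v
  show g (f (funMap u v)) = _
  rw [hf u, hg u]
  rfl

lemma id_hom {X : Type} (iX : L.Structure X) : IsAlgHomOn iX iX (fun x => x) := by
  intro n u v; rfl

lemma reduct_hom [L'.IsAlgebraic] (T : TermTranslation L L') {X Y : Type}
    {iX : L.Structure X} {iY : L.Structure Y} {f : X → Y}
    (hf : IsAlgHomOn iX iY f) :
    IsAlgHomOn (reduct T X iX) (reduct T Y iY) f := by
  intro n g v
  show f (@Term.realize L X iX _ v (T.onFun g))
      = @Term.realize L Y iY _ (fun i => f (v i)) (T.onFun g)
  exact hom_realize hf v _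

lemma mem_InHSP {Acl : ClassOf L} {X : Type} {iX : L.Structure X} (h : Acl X iX) :
    InHSP Acl X iX := by
  refine ⟨Unit, fun _ => X, fun _ => iX, fun _ => h, X, iX, (fun x _ => x), id,
    ?_, ?_, ?_, ?_⟩
  · intro n f v; rfl
  · intro a b hab; exact congrFun hab ()
  · intro n f v; rfl
  · exact fun x => ⟨x, rfl⟩
-- ============== presented algebras ==============

section Present

variable {M : FirstOrder.Language.{0,0}} [M.IsAlgebraic]

/-- The term algebra structure. -/
def termStr (G : Type) : M.Structure (M.Term G) where
  funMap f v := Term.func f v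
  RelMap r _ := isEmptyElim r

def IsCong {G : Type} (R : M.Term G → M.Term G → Prop) : Prop :=
  Equivalence R ∧ ∀ {n : ℕ} (f : M.Functions n) (v w : Fin n → M.Term G),
    (∀ i, R (v i) (w i)) → R (Term.func f v) (Term.func f w)

noncomputable def qStr {G : Type} (R : M.Term G → M.Term G → Prop) :
    M.Structure (Quot R) where
  funMap f v := Quot.mk R (Term.func f fun i => (Quot.exists_rep (v i)).choose)
  RelMap r _ := isEmptyElim r

lemma mk_eq_iff {G : Type} {R : M.Term G → M.Term G → Prop} (hR : Equivalence R)
    {a b : M.Term G} : Quot.mk R a = Quot.mk R b ↔ R a b := by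
  rw [Quot.eq]; exact hR.eqvGen_iff

lemma mk_hom {G : Type} {R : M.Term G → M.Term G → Prop} (hR : IsCong R) :
    IsAlgHomOn (termStr (M := M) G) (qStr R) (Quot.mk R) := by
  intro n g v
  show Quot.mk R (Term.func g v)
      = Quot.mk R (Term.func g fun i => (Quot.exists_rep (Quot.mk R (v i))).choose)
  refine (mk_eq_iff hR.1).2 (hR.2 g _ _ fun i => ?_)
  exact hR.1.symm ((mk_eq_iff hR.1).1 ((Quot.exists_rep (Quot.mk R (v i))).choose_spec))

variable (Dcl : ClassOf M) (G : Type)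
  (Pp : (B : Type) → M.Structure B → (G → B) → Prop)

def PresIdx : Type :=
  {R : M.Term G → M.Term G → Prop // IsCong R ∧ Dcl (Quot R) (qStr R) ∧
      Pp (Quot R) (qStr R) (fun g => Quot.mk R (Term.var g))}

noncomputable def prodStr : M.Structure (∀ i : PresIdx Dcl G Pp, Quot i.1) :=
  @piStructure M (PresIdx Dcl G Pp) (fun i => Quot i.1) (fun i => qStr i.1)

def presMap : M.Term G → ∀ i : PresIdx Dcl G Pp, Quot i.1 :=
  fun t i => Quot.mk i.1 t

lemma presMap_hom :
    IsAlgHomOn (termStr (M := M) G) (prodStr Dcl G Pp) (presMap Dcl G Pp) := by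
  intro n g v
  funext i
  exact mk_hom i.2.1 g v

def PresCarrier : Type :=
  {x : ∀ i : PresIdx Dcl G Pp, Quot i.1 // x ∈ Set.range (presMap Dcl G Pp)}

noncomputable def presStr : M.Structure (PresCarrier Dcl G Pp) where
  funMap {n} f v :=
    ⟨@funMap M _ (prodStr Dcl G Pp) n f (fun j => (v j).1), by
      choose t ht using fun j => (v j).2
      refine ⟨Term.func f t, ?_⟩
      rw [show presMap Dcl G Pp (Term.func f t)
          = @funMap M _ (prodStr Dcl G Pp) n f (fun j => presMap Dcl G Pp (t j))
          from presMap_hom Dcl G Pp f t]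
      congr 1
      funext j
      exact ht j⟩
  RelMap r _ := isEmptyElim r

noncomputable def presGen : G → PresCarrier Dcl G Pp :=
  fun g => ⟨presMap Dcl G Pp (Term.var g), ⟨Term.var g, rfl⟩⟩

lemma presVal_hom :
    IsAlgHomOn (presStr Dcl G Pp) (prodStr Dcl G Pp) Subtype.val := by
  intro n f v; rfl

lemma pres_Dcl (hD : IsPrevariety Dcl) : Dcl (PresCarrier Dcl G Pp) (presStr Dcl G Pp) :=
  hD.2.1 _ (prodStr Dcl G Pp)
    (hD.2.2 (PresIdx Dcl G Pp) (fun i => Quot i.1) (fun i => qStr i.1) fun i => i.2.2.1)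
    _ _ Subtype.val (presVal_hom Dcl G Pp) Subtype.val_injective

lemma pres_gen_eq (t : M.Term G) :
    (⟨presMap Dcl G Pp t, ⟨t, rfl⟩⟩ : PresCarrier Dcl G Pp) =
      @Term.realize M _ (presStr Dcl G Pp) G (presGen Dcl G Pp) t := by
  induction t with
  | var g => rfl
  | func f ts ih =>
      apply Subtype.ext
      show presMap Dcl G Pp (Term.func f ts)
        = (@funMap M _ (presStr Dcl G Pp) _ f
            (fun j => @Term.realize M _ (presStr Dcl G Pp) G (presGen Dcl G Pp) (ts j))).1
      rw [show presMap Dcl G Pp (Term.func f ts)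
          = @funMap M _ (prodStr Dcl G Pp) _ f (fun j => presMap Dcl G Pp (ts j))
          from presMap_hom Dcl G Pp f ts]
      show _ = @funMap M _ (prodStr Dcl G Pp) _ f
          (fun j => (@Term.realize M _ (presStr Dcl G Pp) G (presGen Dcl G Pp) (ts j)).1)
      congr 1
      funext j
      exact congrArg Subtype.val (ih j)

lemma pres_exists (x : PresCarrier Dcl G Pp) :
    ∃ t : M.Term G, x = @Term.realize M _ (presStr Dcl G Pp) G (presGen Dcl G Pp) t := by
  obtain ⟨t, ht⟩ := x.2
  refine ⟨t, ?_⟩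
  rw [← pres_gen_eq]
  exact Subtype.ext ht.symm

lemma pres_unique {B : Type} {iB : M.Structure B} {h h' : PresCarrier Dcl G Pp → B}
    (hh : IsAlgHomOn (presStr Dcl G Pp) iB h) (hh' : IsAlgHomOn (presStr Dcl G Pp) iB h')
    (hgen : ∀ g, h (presGen Dcl G Pp g) = h' (presGen Dcl G Pp g)) : h = h' := by
  funext x
  obtain ⟨t, rfl⟩ := pres_exists Dcl G Pp x
  rw [hom_realize hh, hom_realize hh']
  congr 1
  funext g
  exact hgen g

end Present
-- ============== universal property ==============

section Universal

variable {M : FirstOrder.Language.{0,0}} [M.IsAlgebraic]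
variable (Dcl : ClassOf M) {G : Type}
  (Pp : (B : Type) → M.Structure B → (G → B) → Prop)
variable {B : Type} (iB : M.Structure B) (v : G → B)

/-- Kernel of evaluation at `v`. -/
def kerR : M.Term G → M.Term G → Prop :=
  fun t t' => @Term.realize M B iB G v t = @Term.realize M B iB G v t'

lemma kerR_cong : IsCong (kerR iB v) := by
  constructor
  · exact ⟨fun _ => rfl, Eq.symm, Eq.trans⟩
  · intro n f a b h
    show @Term.realize M B iB G v (Term.func f a) = @Term.realize M B iB G v (Term.func f b)
    show (@funMap M B iB n f fun i => Term.realize v (a i))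
        = (@funMap M B iB n f fun i => Term.realize v (b i))
    congr 1
    funext i
    exact h i

noncomputable def kerLift : Quot (kerR iB v) → B :=
  Quot.lift (@Term.realize M B iB G v) (fun _ _ h => h)

lemma kerLift_inj : Function.Injective (kerLift iB v) := by
  intro q q' h
  obtain ⟨t, rfl⟩ := Quot.exists_rep q
  obtain ⟨t', rfl⟩ := Quot.exists_rep q'
  exact Quot.sound h

lemma kerLift_hom : IsAlgHomOn (qStr (kerR iB v)) iB (kerLift iB v) := by
  intro n f w
  show @Term.realize M B iB G v
      (Term.func f fun i => (Quot.exists_rep (w i)).choose)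
    = @funMap M B iB n f fun i => kerLift iB v (w i)
  show (@funMap M B iB n f fun i =>
      Term.realize v ((Quot.exists_rep (w i)).choose)) = _
  congr 1
  funext i
  conv_rhs => rw [← (Quot.exists_rep (w i)).choose_spec]
  rfl

lemma ker_presIdx (hD : IsPrevariety Dcl) (hB : Dcl B iB)
    (hP : Pp (Quot (kerR iB v)) (qStr (kerR iB v))
      (fun g => Quot.mk (kerR iB v) (Term.var g))) :
    IsCong (kerR iB v) ∧ Dcl (Quot (kerR iB v)) (qStr (kerR iB v)) ∧
      Pp (Quot (kerR iB v)) (qStr (kerR iB v))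
        (fun g => Quot.mk (kerR iB v) (Term.var g)) :=
  ⟨kerR_cong iB v,
    hD.2.1 B iB hB _ _ (kerLift iB v) (kerLift_hom iB v) (kerLift_inj iB v), hP⟩

/-- Well-definedness of evaluation on the presented algebra. -/
lemma pres_welldef (hD : IsPrevariety Dcl) (hB : Dcl B iB)
    (hP : Pp (Quot (kerR iB v)) (qStr (kerR iB v))
      (fun g => Quot.mk (kerR iB v) (Term.var g)))
    {t t' : M.Term G} (h : presMap Dcl G Pp t = presMap Dcl G Pp t') :
    @Term.realize M B iB G v t = @Term.realize M B iB G v t' := by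
  have hidx := ker_presIdx Dcl Pp iB v hD hB hP
  let i0 : PresIdx Dcl G Pp := ⟨kerR iB v, hidx⟩
  have := congrFun h i0
  exact (mk_eq_iff (kerR_cong iB v).1).1 this

noncomputable def presLift : PresCarrier Dcl G Pp → B :=
  fun x => @Term.realize M B iB G v x.2.choose

lemma presLift_eq (hD : IsPrevariety Dcl) (hB : Dcl B iB)
    (hP : Pp (Quot (kerR iB v)) (qStr (kerR iB v))
      (fun g => Quot.mk (kerR iB v) (Term.var g)))
    (x : PresCarrier Dcl G Pp) (t : M.Term G) (ht : x.1 = presMap Dcl G Pp t) :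
    presLift Dcl Pp iB v x = @Term.realize M B iB G v t := by
  refine pres_welldef Dcl Pp iB v hD hB hP ?_
  rw [x.2.choose_spec, ht]

lemma presLift_hom (hD : IsPrevariety Dcl) (hB : Dcl B iB)
    (hP : Pp (Quot (kerR iB v)) (qStr (kerR iB v))
      (fun g => Quot.mk (kerR iB v) (Term.var g))) :
    IsAlgHomOn (presStr Dcl G Pp) iB (presLift Dcl Pp iB v) := by
  intro n f w
  classical
  have ht : ∀ j, (w j).1 = presMap Dcl G Pp (w j).2.choose := fun j => ((w j).2.choose_spec).symm
  have h1 : (@funMap M _ (presStr Dcl G Pp) n f w).1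
      = presMap Dcl G Pp (Term.func f (fun j => (w j).2.choose)) := by
    show (@funMap M _ (prodStr Dcl G Pp) n f (fun j => (w j).1)) = _
    rw [show presMap Dcl G Pp (Term.func f (fun j => (w j).2.choose))
        = @funMap M _ (prodStr Dcl G Pp) n f (fun j => presMap Dcl G Pp (w j).2.choose)
        from presMap_hom Dcl G Pp f _]
    congr 1
    funext j
    exact ht j
  rw [presLift_eq Dcl Pp iB v hD hB hP _ _ h1]
  rfl

lemma presLift_gen (hD : IsPrevariety Dcl) (hB : Dcl B iB)
    (hP : Pp (Quot (kerR iB v)) (qStr (kerR iB v))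
      (fun g => Quot.mk (kerR iB v) (Term.var g)))
    (g : G) : presLift Dcl Pp iB v (presGen Dcl G Pp g) = v g :=
  presLift_eq Dcl Pp iB v hD hB hP _ (Term.var g) rfl

lemma pres_universal (hD : IsPrevariety Dcl) (hB : Dcl B iB)
    (hP : Pp (Quot (kerR iB v)) (qStr (kerR iB v))
      (fun g => Quot.mk (kerR iB v) (Term.var g))) :
    ∃! h : PresCarrier Dcl G Pp → B,
      IsAlgHomOn (presStr Dcl G Pp) iB h ∧ ∀ g, h (presGen Dcl G Pp g) = v g := by
  refine ⟨presLift Dcl Pp iB v,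
    ⟨presLift_hom Dcl Pp iB v hD hB hP, presLift_gen Dcl Pp iB v hD hB hP⟩, ?_⟩
  rintro h' ⟨h'hom, h'gen⟩
  refine pres_unique Dcl G Pp h'hom (presLift_hom Dcl Pp iB v hD hB hP) ?_
  intro g
  rw [h'gen g, presLift_gen Dcl Pp iB v hD hB hP g]

end Universal
-- ============== free algebras and coproducts exist ==============

section Exists

variable {M : FirstOrder.Language.{0,0}} [M.IsAlgebraic]

lemma free_exists (Dcl : ClassOf M) (hD : IsPrevariety Dcl) (G : Type) :
    ∃ (F : Type) (iF : M.Structure F) (gen : G → F),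
      Dcl F iF ∧
      (∀ x : F, ∃ t : M.Term G, x = @Term.realize M F iF G gen t) ∧
      (∀ (B : Type) (iB : M.Structure B), Dcl B iB → ∀ v : G → B,
        ∃! h : F → B, IsAlgHomOn iF iB h ∧ ∀ g, h (gen g) = v g) := by
  classical
  refine ⟨PresCarrier Dcl G (fun _ _ _ => True), presStr Dcl G (fun _ _ _ => True),
    presGen Dcl G (fun _ _ _ => True), pres_Dcl Dcl G _ hD, pres_exists Dcl G _,
    fun B iB hB v => pres_universal Dcl (fun _ _ _ => True) iB v hD hB trivial⟩

lemma coprod_exists (Dcl : ClassOf M) (hD : IsPrevariety Dcl)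
    {κ : Type} (K : κ → Type) (iK : ∀ k, M.Structure (K k)) :
    ∃ (C : Type) (iC : M.Structure C) (ε : ∀ k, K k → C),
      IsCoprodB Dcl K iK C iC ε ∧
      ∀ c : C, ∃ t : M.Term ((k : κ) × K k),
        c = @Term.realize M C iC _ (fun p => ε p.1 p.2) t := by
  classical
  set G := (k : κ) × K k with hG
  set Pp : (B : Type) → M.Structure B → (G → B) → Prop :=
    fun B iB w => ∀ k, IsAlgHomOn (iK k) iB (fun a => w ⟨k, a⟩) with hPp
  refine ⟨PresCarrier Dcl G Pp, presStr Dcl G Pp,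
    fun k a => presGen Dcl G Pp ⟨k, a⟩, ⟨pres_Dcl Dcl G Pp hD, ?_, ?_⟩, ?_⟩
  · -- the injections are homomorphisms
    intro k n g u
    apply Subtype.ext
    funext i
    exact i.2.2.2 k g u
  · -- universal property
    intro B iB hB f hf
    have hP : Pp (Quot (kerR iB (fun p : G => f p.1 p.2)))
        (qStr (kerR iB (fun p : G => f p.1 p.2)))
        (fun g => Quot.mk (kerR iB (fun p : G => f p.1 p.2)) (Term.var g)) := by
      intro k n g u
      apply kerLift_inj iB (fun p : G => f p.1 p.2)
      have h1 : kerLift iB (fun p : G => f p.1 p.2)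
          (Quot.mk _ (Term.var (⟨k, funMap g u⟩ : G))) = f k (funMap g u) := rfl
      rw [h1, kerLift_hom iB (fun p : G => f p.1 p.2) g]
      rw [hf k g u]
      rfl
    obtain ⟨h, ⟨hhom, hgen⟩, huniq⟩ :=
      pres_universal Dcl Pp iB (fun p : G => f p.1 p.2) hD hB hP
    refine ⟨h, ⟨hhom, fun k => funext fun a => hgen ⟨k, a⟩⟩, ?_⟩
    rintro h' ⟨h'hom, h'comm⟩
    exact huniq h' ⟨h'hom, fun p => congrFun (h'comm p.1) p.2⟩
  · -- generation
    intro c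
    exact pres_exists Dcl G Pp c

end Exists
-- ============== the key claim ==============

section Key

lemma key_claim {L L' : FirstOrder.Language.{0,0}} [L.IsAlgebraic] [L'.IsAlgebraic]
    (T : TermTranslation L L') (Acl : ClassOf L) (Ccl : ClassOf L')
    (hA : IsPrevariety Acl) (hC : IsPrevariety Ccl)
    (hBased : CBased T (InHSP Acl) Ccl) (hS : SatisfiesSB T Acl Ccl)
    (α : Type) (t : L.Term α) :
    ∃ (β : Type) (s : L'.Term β) (ι : β → α) (u : β → L.Term Unit),
      ∀ (X : Type) (iX : L.Structure X), InHSP Acl X iX → ∀ x : α → X,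
        @Term.realize L X iX α x t =
          @Term.realize L' X (reduct T X iX) β
            (fun j => @Term.realize L X iX Unit (fun _ => x (ι j)) (u j)) s := by
  classical
  obtain ⟨F1, iF1, g1, hF1, hF1gen, hF1univ⟩ := free_exists Acl hA Unit
  obtain ⟨Fa, iFa, xg, hFa, hFagen, hFauniv⟩ := free_exists Acl hA α
  -- coproduct injections ε i : F1 → Fa
  have hEps := fun i : α => hF1univ Fa iFa hFa (fun _ => xg i)
  set ε : α → F1 → Fa := fun i => (hEps i).choose with hε
  have εspec : ∀ i, IsAlgHomOn iF1 iFa (ε i) ∧ ∀ g : Unit, ε i (g1 g) = xg i :=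
    fun i => (hEps i).choose_spec.1
  -- (Fa, ε) is the Acl-coproduct of α copies of F1
  have coprodA : IsCoprodB Acl (fun _ : α => F1) (fun _ => iF1) Fa iFa ε := by
    refine ⟨hFa, fun i => (εspec i).1, ?_⟩
    intro B iB hB f hf
    obtain ⟨h, ⟨hhom, hgen⟩, huniq⟩ := hFauniv B iB hB (fun i => f i (g1 ()))
    refine ⟨h, ⟨hhom, ?_⟩, ?_⟩
    · intro i
      obtain ⟨w, -, huniq1⟩ := hF1univ B iB hB (fun g => f i (g1 g))
      have e1 : (fun a => h (ε i a)) = w := by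
        refine huniq1 _ ⟨IsAlgHomOn.comp' (εspec i).1 hhom, ?_⟩
        intro g
        show h (ε i (g1 g)) = f i (g1 g)
        rw [(εspec i).2 g, hgen i]
      have e2 : f i = w := huniq1 _ ⟨hf i, fun g => rfl⟩
      show (fun a => h (ε i a)) = f i
      rw [e1, e2]
    · rintro h' ⟨h'hom, h'comm⟩
      refine huniq h' ⟨h'hom, ?_⟩
      intro i
      rw [← (εspec i).2 ()]
      exact congrFun (h'comm i) (g1 ())
  -- the Ccl-coproduct of the reducts
  obtain ⟨P, iP, η, coprodC, hPgen⟩ :=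
    coprod_exists Ccl hC (fun _ : α => F1) (fun _ => reduct T F1 iF1)
  -- the comparison map
  obtain ⟨χ0, ⟨χ0hom, χ0comm⟩, -⟩ :=
    coprodC.2.2 Fa (reduct T Fa iFa) (hBased Fa iFa (mem_InHSP hFa)) ε
      (fun i => reduct_hom T (εspec i).1)
  have hsurj : Function.Surjective χ0 :=
    hS α (fun _ => F1) (fun _ => iF1) (fun _ => hF1) Fa iFa ε coprodA P iP η coprodC
      χ0 χ0hom χ0comm
  obtain ⟨p, hp⟩ := hsurj (@Term.realize L Fa iFa α xg t)
  obtain ⟨s0, hs0⟩ := hPgen p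
  choose u hu using hF1gen
  refine ⟨(_ : α) × F1, s0, fun q => q.1, fun q => u q.2, ?_⟩
  -- the master identity in Fa
  have master : @Term.realize L Fa iFa α xg t
      = @Term.realize L' Fa (reduct T Fa iFa) _
          (fun q : (_ : α) × F1 =>
            @Term.realize L Fa iFa Unit (fun _ => xg q.1) (u q.2)) s0 := by
    calc @Term.realize L Fa iFa α xg t = χ0 p := hp.symm
      _ = χ0 (@Term.realize L' P iP _ (fun q : (_ : α) × F1 => η q.1 q.2) s0) := by
          rw [← hs0]
      _ = @Term.realize L' Fa (reduct T Fa iFa) _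
            (fun q : (_ : α) × F1 => χ0 (η q.1 q.2)) s0 :=
          hom_realize (L := L') χ0hom _ s0
      _ = @Term.realize L' Fa (reduct T Fa iFa) _
            (fun q : (_ : α) × F1 =>
              @Term.realize L Fa iFa Unit (fun _ => xg q.1) (u q.2)) s0 := by
          congr 1
          funext q
          have h1 : χ0 (η q.1 q.2) = ε q.1 q.2 := congrFun (χ0comm q.1) q.2
          rw [h1]
          calc ε q.1 q.2 = ε q.1 (@Term.realize L F1 iF1 Unit g1 (u q.2)) := by
                rw [← hu q.2]
            _ = @Term.realize L Fa iFa Unit (fun g => ε q.1 (g1 g)) (u q.2) :=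
                hom_realize (εspec q.1).1 g1 (u q.2)
            _ = @Term.realize L Fa iFa Unit (fun _ => xg q.1) (u q.2) := by
                congr 1
                funext g
                exact (εspec q.1).2 g
  -- transfer the identity to every member of the variety
  intro X iX hX x
  obtain ⟨κ, Mf, iM, hM, D, iD, e, fs, he, hei, hfhom, hfs⟩ := hX
  have hD : Acl D iD :=
    hA.2.1 _ (@piStructure L κ Mf iM) (hA.2.2 κ Mf iM hM) D iD e he hei
  choose d hd using fun i => hfs (x i)
  obtain ⟨h, ⟨hhom, hgen⟩, -⟩ := hFauniv D iD hD d
  have ghom : IsAlgHomOn iFa iX (fun y => fs (h y)) := IsAlgHomOn.comp' hhom hfhom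
  have gxg : ∀ i, fs (h (xg i)) = x i := fun i => by rw [hgen i]; exact hd i
  calc @Term.realize L X iX α x t
      = @Term.realize L X iX α (fun i => fs (h (xg i))) t := by
        congr 1
        funext i
        exact (gxg i).symm
    _ = fs (h (@Term.realize L Fa iFa α xg t)) := (hom_realize (f := fun y => fs (h y)) ghom xg t).symm
    _ = fs (h (@Term.realize L' Fa (reduct T Fa iFa) _
          (fun q : (_ : α) × F1 =>
            @Term.realize L Fa iFa Unit (fun _ => xg q.1) (u q.2)) s0)) := by
        rw [master]
    _ = @Term.realize L' X (reduct T X iX) _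
          (fun q : (_ : α) × F1 => fs (h
            (@Term.realize L Fa iFa Unit (fun _ => xg q.1) (u q.2)))) s0 :=
        hom_realize (L := L') (f := fun y => fs (h y)) (@reduct_hom L L' _ T Fa X iFa iX (fun y => fs (h y)) ghom) _ s0
    _ = @Term.realize L' X (reduct T X iX) _
          (fun q : (_ : α) × F1 =>
            @Term.realize L X iX Unit (fun _ => x q.1) (u q.2)) s0 := by
        congr 1
        funext q
        calc fs (h (@Term.realize L Fa iFa Unit (fun _ => xg q.1) (u q.2)))
            = @Term.realize L X iX Unit (fun _ => fs (h (xg q.1))) (u q.2) :=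
              hom_realize (f := fun y => fs (h y)) ghom _ _
          _ = @Term.realize L X iX Unit (fun _ => x q.1) (u q.2) := by
              congr 1
              funext g
              exact gxg q.1

end Key

/-- Let `A` and `C` be prevarieties such that the variety `V(A)` generated by `A` is
`C`-based.  Then the following are equivalent:
(1) `U_{A,C}` satisfies (S);
(2) `U_{B,C}` satisfies (S) for each prevariety `B` with
`ISP(Free_A(ℵ₀)) ⊆ B ⊆ V(A)`. -/
theorem satisfiesS_extends_between_free_and_variety
    (L L' : FirstOrder.Language.{0,0}) [L.IsAlgebraic] [L'.IsAlgebraic]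
    (T : TermTranslation L L')
    (Acl : ClassOf L) (Ccl : ClassOf L')
    (hA : IsPrevariety Acl) (hC : IsPrevariety Ccl)
    (hBased : CBased T (InHSP Acl) Ccl) :
    SatisfiesSB T Acl Ccl ↔
      ∀ Bcl : ClassOf L, IsPrevariety Bcl →
        (∀ (F : Type) (iF : L.Structure F) (gen : ℕ → F),
          IsFreeOverB Acl ℕ F iF gen →
          ∀ (X : Type) (iX : L.Structure X), ISPb1 F iF X iX → Bcl X iX) →
        (∀ (X : Type) (iX : L.Structure X), Bcl X iX → InHSP Acl X iX) →
        SatisfiesSB T Bcl Ccl := by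
  constructor
  · -- (1) → (2)
    intro h1 Bcl hBpre _hfree hBsub
    intro κ K iK hK C iC ε hcoC P iP η hcoP χ hχhom hχcomm
    intro c
    classical
    -- Step 1: C is generated by the images of the coproduct injections
    set E0 : Set C := {c | ∃ t : L.Term ((k : κ) × K k),
      c = @Term.realize L C iC _ (fun p => ε p.1 p.2) t} with hE0
    have hcl : ∀ {n : ℕ} (f : L.Functions n) (w : Fin n → C),
        (∀ j, w j ∈ E0) → @funMap L C iC n f w ∈ E0 := by
      intro n f w hw
      choose ts hts using hw
      refine ⟨Term.func f ts, ?_⟩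
      show @funMap L C iC n f w
        = @funMap L C iC n f (fun j => Term.realize (fun p => ε p.1 p.2) (ts j))
      congr 1
      funext j
      exact hts j
    let iE0 : L.Structure ↥E0 :=
      { funMap := fun {n} f w =>
          ⟨@funMap L C iC n f (fun j => (w j).1), hcl f _ (fun j => (w j).2)⟩,
        RelMap := fun r _ => isEmptyElim r }
    have valhom : IsAlgHomOn iE0 iC Subtype.val := by intro n f w; rfl
    have hBclE0 : Bcl ↥E0 iE0 :=
      hBpre.2.1 C iC hcoC.1 ↥E0 iE0 Subtype.val valhom Subtype.val_injective
    set ε' : ∀ k, K k → ↥E0 := fun k a => ⟨ε k a, ⟨Term.var ⟨k, a⟩, rfl⟩⟩ with hε'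
    have ε'hom : ∀ k, IsAlgHomOn (iK k) iE0 (ε' k) := by
      intro k n f w
      apply Subtype.ext
      show ε k (funMap f w) = @funMap L C iC n f (fun j => ε k (w j))
      exact hcoC.2.1 k f w
    obtain ⟨h0, ⟨h0hom, h0comm⟩, -⟩ := hcoC.2.2 ↥E0 iE0 hBclE0 ε' ε'hom
    obtain ⟨hid, -, huniqC⟩ := hcoC.2.2 C iC hcoC.1 ε hcoC.2.1
    have idhom : IsAlgHomOn iC iC (id : C → C) := by intro n f v; rfl
    have e1 : (fun c => (h0 c).1) = hid := by
      refine huniqC _ ⟨IsAlgHomOn.comp' h0hom valhom, ?_⟩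
      intro k
      funext a
      exact congrArg Subtype.val (congrFun (h0comm k) a)
    have e2 : (id : C → C) = hid := huniqC _ ⟨idhom, fun k => rfl⟩
    have hcE0 : c ∈ E0 := by
      have hcc : (h0 c).1 = c := (congrFun e1 c).trans (congrFun e2 c).symm
      exact hcc ▸ (h0 c).2
    obtain ⟨t, ht⟩ := hcE0
    -- Step 2: apply the key claim
    obtain ⟨β, s, ι, uu, hkey⟩ :=
      key_claim T Acl Ccl hA hC hBased h1 ((k : κ) × K k) t
    have hCin : InHSP Acl C iC := hBsub C iC hcoC.1
    have hc2 : c = @Term.realize L' C (reduct T C iC) β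
        (fun j => @Term.realize L C iC Unit
          (fun _ => ε (ι j).1 (ι j).2) (uu j)) s :=
      ht.trans (hkey C iC hCin (fun p => ε p.1 p.2))
    set b : ∀ j : β, K (ι j).1 :=
      fun j => @Term.realize L (K (ι j).1) (iK (ι j).1) Unit (fun _ => (ι j).2) (uu j)
      with hb
    refine ⟨@Term.realize L' P iP β (fun j => η (ι j).1 (b j)) s, ?_⟩
    calc χ (@Term.realize L' P iP β (fun j => η (ι j).1 (b j)) s)
        = @Term.realize L' C (reduct T C iC) β
            (fun j => χ (η (ι j).1 (b j))) s :=
          hom_realize (L := L') (f := χ) hχhom _ s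
      _ = @Term.realize L' C (reduct T C iC) β
            (fun j => @Term.realize L C iC Unit
              (fun _ => ε (ι j).1 (ι j).2) (uu j)) s := by
          congr 1
          funext j
          exact (congrFun (hχcomm (ι j).1) (b j)).trans
            (hom_realize (f := ε (ι j).1) (hcoC.2.1 (ι j).1) (fun _ => (ι j).2) (uu j))
      _ = c := hc2.symm
  · -- (2) → (1)
    intro h2
    refine h2 Acl hA ?_ ?_
    · intro F iF gen hfree X iX hX
      obtain ⟨κ', e, he, hei⟩ := hX
      exact hA.2.1 (κ' → F) (@piStructure L κ' (fun _ => F) (fun _ => iF))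
        (hA.2.2 κ' (fun _ => F) (fun _ => iF) (fun _ => hfree.1)) X iX e he hei
    · intro X iX hX
      exact mem_InHSP hX

end CoproductsPaper
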